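/- Let κ be a measurable cardinal and let 𝒰 be a κ-complete uniform ultrafilter over κ. If Ch(𝒰) = μ, then cf(μ) > κ. -/

import Mathlib

open Cardinal

/-- A base for an ultrafilter `U`: a collection of members of `U` such that every
member of `U` contains some element of the collection. -/
def IsUltraBase {α : Type*} (U : Ultrafilter α) (B : Set (Set α)) : Prop :=
  (∀ b ∈ B, b ∈ U) ∧ ∀ A ∈ U, ∃ b ∈ B, b ⊆ A

/-- The characteristic `Ch(U)` of an ultrafilter: the minimal cardinality of a base. -/
noncomputable def ultraCh {α : Type*} (U : Ultrafilter α) : Cardinal :=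
  sInf {c : Cardinal | ∃ B : Set (Set α), IsUltraBase U B ∧ #↥B = c}

/-- An ultrafilter is `κ`-complete iff it is closed under intersections of fewer
than `κ` of its members. -/
def UltraComplete {α : Type*} (κ : Cardinal) (U : Ultrafilter α) : Prop :=
  ∀ S : Set (Set α), #↥S < κ → (∀ s ∈ S, s ∈ U) → ⋂₀ S ∈ U

universe u

/-- Initial segments `Iic` in the canonical order of type of an infinite cardinal are small. -/
lemma auxIicSmall {c : Cardinal.{u}} (hc : ℵ₀ ≤ c) (i : c.ord.ToType) : #(Set.Iic i) < c := by
  have h1 : #(Set.Iio i) < c := Cardinal.mk_Iio_ord_toType i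
  have h2 : (Set.Iic i : Set c.ord.ToType) = insert i (Set.Iio i) := by
    ext x; simp [le_iff_lt_or_eq, or_comm]
  rw [h2]
  calc #(insert i (Set.Iio i) : Set c.ord.ToType) ≤ #(Set.Iio i) + 1 := Cardinal.mk_insert_le
    _ < c := Cardinal.add_lt_of_lt hc h1 (lt_of_lt_of_le one_lt_aleph0 hc)

/-- If a union of fewer than `κ` sets belongs to a `κ`-complete ultrafilter,
one of the sets belongs to it. -/
lemma auxUnion {α : Type u} {κ : Cardinal.{u}} {U : Ultrafilter α}
    (hcomplete : UltraComplete κ U) {J : Type u} (g : J → Set α)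
    (hJ : #J < κ) (hU : (⋃ j, g j) ∈ U) : ∃ j, g j ∈ U := by
  by_contra hc
  push_neg at hc
  have h2 : ⋂₀ (Set.range fun j => (g j)ᶜ) ∈ U := by
    apply hcomplete
    · exact lt_of_le_of_lt Cardinal.mk_range_le hJ
    · rintro s ⟨j, rfl⟩
      exact Ultrafilter.compl_mem_iff_notMem.2 (hc j)
  have h3 : ⋂₀ (Set.range fun j => (g j)ᶜ) = (⋃ j, g j)ᶜ := by
    rw [Set.sInter_range, Set.compl_iUnion]
  rw [h3] at h2
  exact (Ultrafilter.compl_mem_iff_notMem.1 h2) hU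

/-- Existence of a minimal unbounded function modulo a `κ`-complete uniform ultrafilter. -/
lemma auxMinFun {α : Type u} {κ : Cardinal.{u}} {U : Ultrafilter α}
    (hκ : #α = κ) (huncount : ℵ₀ < κ)
    (hcomplete : UltraComplete κ U)
    (hsmall : ∀ s : Set α, #s < κ → s ∉ U) :
    ∃ f : α → κ.ord.ToType, (∀ γ, {x | γ < f x} ∈ U) ∧
      ∀ g : α → κ.ord.ToType, {x | g x < f x} ∈ U → ∃ γ, {x | γ < g x} ∉ U := by
  classical
  set K := κ.ord.ToType with hK
  obtain ⟨e2⟩ : Nonempty (α ≃ K) := Cardinal.eq.1 (by rw [hκ, Cardinal.mk_ord_toType])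
  have hf₀ : ∀ γ : K, {x | γ < e2 x} ∈ U := by
    intro γ
    have h1 : #(e2 ⁻¹' (Set.Iic γ)) < κ :=
      lt_of_le_of_lt (Cardinal.mk_preimage_of_injective e2 _ e2.injective)
        (auxIicSmall huncount.le γ)
    have h2 : (e2 ⁻¹' (Set.Iic γ))ᶜ ∈ U :=
      Ultrafilter.compl_mem_iff_notMem.2 (hsmall _ h1)
    have h3 : {x | γ < e2 x} = (e2 ⁻¹' (Set.Iic γ))ᶜ := by
      ext x; simp [not_le]
    rwa [h3]
  by_contra hcon
  push_neg at hcon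
  have hcon' : ∀ f : α → K, (∀ γ, {x | γ < f x} ∈ U) →
      ∃ g : α → K, {x | g x < f x} ∈ U ∧ ∀ γ, {x | γ < g x} ∈ U := by
    intro f hf
    obtain ⟨g, hg1, hg2⟩ := hcon f hf
    exact ⟨g, hg1, hg2⟩
  choose g hgU hgF using hcon'
  let seq : ℕ → {f : α → K // ∀ γ, {x | γ < f x} ∈ U} := fun n =>
    Nat.rec ⟨fun x => e2 x, hf₀⟩ (fun _ p => ⟨g p.1 p.2, hgF p.1 p.2⟩) n
  have hseq : ∀ n, {x | (seq (n + 1)).1 x < (seq n).1 x} ∈ U := fun n =>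
    hgU (seq n).1 (seq n).2
  have hint : ⋂₀ (Set.range fun n => {x | (seq (n + 1)).1 x < (seq n).1 x}) ∈ U := by
    apply hcomplete
    · exact lt_of_le_of_lt (Set.countable_range _).le_aleph0 huncount
    · rintro s ⟨n, rfl⟩; exact hseq n
  obtain ⟨x, hx⟩ := Ultrafilter.nonempty_of_mem hint
  have hdesc : ∀ n, (seq (n + 1)).1 x < (seq n).1 x := fun n =>
    hx _ ⟨n, rfl⟩
  obtain ⟨m, ⟨n, rfl⟩, hmin⟩ :=
    (wellFounded_lt (α := K)).has_min (Set.range fun n => (seq n).1 x) ⟨_, 0, rfl⟩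
  exact hmin _ ⟨n + 1, rfl⟩ (hdesc n)

/-- If `κ` is a measurable cardinal (uncountable, carrying a `κ`-complete uniform
ultrafilter) and `U` is a `κ`-complete uniform ultrafilter over `κ` with
`Ch(U) = μ`, then `cf(μ) > κ`. -/
theorem stmt2 {α : Type*} (κ : Cardinal) (hκ : #α = κ) (huncount : ℵ₀ < κ)
    (U : Ultrafilter α)
    (hcomplete : UltraComplete κ U)
    (huniform : ∀ A ∈ U, #↥A = κ)
    (μ : Cardinal) (h : ultraCh U = μ) :
    κ < μ.ord.cof := by
  classical
  have hsmall : ∀ s : Set α, #s < κ → s ∉ U := fun s hs hsU => absurd (huniform s hsU) hs.ne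
  -- a base of minimal cardinality
  have hset : ({c : Cardinal | ∃ B : Set (Set α), IsUltraBase U B ∧ #↥B = c}).Nonempty :=
    ⟨#{A : Set α | A ∈ U}, {A | A ∈ U}, ⟨fun b hb => hb, fun A hA => ⟨A, hA, subset_rfl⟩⟩, rfl⟩
  have hμmem : μ ∈ {c : Cardinal | ∃ B : Set (Set α), IsUltraBase U B ∧ #↥B = c} := by
    rw [← h]; exact csInf_mem hset
  obtain ⟨B, hBbase, hBcard⟩ := hμmem
  have hmin : ∀ C : Set (Set α), IsUltraBase U C → μ ≤ #↥C := by
    intro C hC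
    rw [← h]
    exact csInf_le' ⟨C, hC, rfl⟩
  -- κ ≤ μ
  have hκμ : κ ≤ μ := by
    by_contra hlt
    push_neg at hlt
    have hInt : ⋂₀ B ∈ U := hcomplete B (hBcard ▸ hlt) hBbase.1
    obtain ⟨x, hx⟩ := Ultrafilter.nonempty_of_mem hInt
    have hxc : ({x}ᶜ : Set α) ∈ U := by
      apply Ultrafilter.compl_mem_iff_notMem.2
      apply hsmall
      rw [Cardinal.mk_singleton]
      exact lt_trans Cardinal.one_lt_aleph0 huncount
    obtain ⟨b, hbB, hbs⟩ := hBbase.2 _ hxc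
    exact hbs (hx b hbB) rfl
  have hμinf : ℵ₀ ≤ μ := le_trans huncount.le hκμ
  by_contra hcon
  push_neg at hcon
  -- a cofinal subset of size `cof μ.ord ≤ κ`
  obtain ⟨S, hSunb, hScard⟩ := Order.cof_eq (α := μ.ord.ToType)
  rw [Ordinal.cof_toType] at hScard
  obtain ⟨e⟩ : Nonempty (↥B ≃ μ.ord.ToType) :=
    Cardinal.eq.1 (by rw [hBcard, Cardinal.mk_ord_toType])
  obtain ⟨ι⟩ : Nonempty (↥S ↪ κ.ord.ToType) := by
    apply (Cardinal.le_def _ _).1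
    rw [hScard, Cardinal.mk_ord_toType]
    exact le_trans hcon le_rfl
  obtain ⟨f, hf1, hf2⟩ := auxMinFun hκ huncount hcomplete hsmall
  set T : ↥S → Set α := fun i => {x | ι i < f x} with hT
  have hTU : ∀ i, T i ∈ U := fun i => hf1 (ι i)
  set Bset : ↥S → Set (Set α) := fun i => (fun b : ↥B => (b : Set α)) '' {b : ↥B | e b ≤ i.1}
    with hBset
  have hBsetcard : ∀ i, #(Bset i) < μ := by
    intro i
    calc #(Bset i) ≤ #({b : ↥B | e b ≤ i.1}) := Cardinal.mk_image_le
      _ ≤ #(Set.Iic i.1) := Cardinal.mk_le_of_injective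
          (f := fun b : ({b : ↥B | e b ≤ i.1} : Set ↥B) => (⟨e b.1, b.2⟩ : Set.Iic i.1))
          (fun a b hab => Subtype.ext (e.injective (congrArg Subtype.val hab)))
      _ < μ := auxIicSmall hμinf i.1
  -- witnesses
  have hwit : ∀ i : ↥S, ∃ A ∈ U, ∀ b ∈ Bset i, ¬ (b ∩ T i ⊆ A) := by
    intro i
    have hnb : ¬ IsUltraBase U ((fun b => b ∩ T i) '' Bset i) := by
      intro hb
      exact absurd (hmin _ hb)
        (not_le.2 (lt_of_le_of_lt Cardinal.mk_image_le (hBsetcard i)))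
    have hfirst : ∀ c ∈ (fun b => b ∩ T i) '' Bset i, c ∈ U := by
      rintro c ⟨b, hbB, rfl⟩
      obtain ⟨b', hb', rfl⟩ := hbB
      exact Filter.inter_mem (hBbase.1 _ b'.2) (hTU i)
    rw [IsUltraBase, not_and] at hnb
    have := hnb hfirst
    push_neg at this
    obtain ⟨A, hAU, hA⟩ := this
    exact ⟨A, hAU, fun b hb => hA _ ⟨b, hb, rfl⟩⟩
  choose A_ hAU hAwit using hwit
  set A : Set α := {x | ∀ i : ↥S, ι i < f x → x ∈ A_ i} with hAdef
  have hA : A ∈ U := by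
    by_contra hA
    have hZ : Aᶜ ∈ U := Ultrafilter.compl_mem_iff_notMem.2 hA
    have hZex : ∀ x ∈ Aᶜ, ∃ i : ↥S, ι i < f x ∧ x ∉ A_ i := by
      intro x hx
      by_contra hno
      push_neg at hno
      exact hx fun i hi => hno i hi
    set g : α → κ.ord.ToType := fun x =>
      if hx : ∃ i : ↥S, ι i < f x ∧ x ∉ A_ i then ι hx.choose else f x with hg
    have hgf : {x | g x < f x} ∈ U := by
      apply Filter.mem_of_superset hZ
      intro x hx
      have hx' := hZex x hx
      show g x < f x
      rw [hg]
      simp only [dif_pos hx']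
      exact hx'.choose_spec.1
    obtain ⟨γ, hγ⟩ := hf2 g hgf
    have hle : {x | g x ≤ γ} ∈ U := by
      have h2 := Ultrafilter.compl_mem_iff_notMem.2 hγ
      have h3 : {x | γ < g x}ᶜ = {x | g x ≤ γ} := by ext x; simp [not_lt]
      rwa [h3] at h2
    have hE : Aᶜ ∩ {x | g x ≤ γ} ∈ U := Filter.inter_mem hZ hle
    set piece : ↥(Set.Iic γ) → Set α :=
      fun δ => (Aᶜ ∩ {x | g x ≤ γ}) ∩ {x | g x = δ.1} with hpiece
    have hUnion : (⋃ δ : ↥(Set.Iic γ), piece δ) ∈ U := by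
      apply Filter.mem_of_superset hE
      intro x hx
      exact Set.mem_iUnion.2 ⟨⟨g x, hx.2⟩, ⟨hx, rfl⟩⟩
    obtain ⟨δ, hδ⟩ := auxUnion hcomplete piece (auxIicSmall huncount.le γ) hUnion
    obtain ⟨x₀, hx₀⟩ := Ultrafilter.nonempty_of_mem hδ
    have hx₀ex := hZex x₀ hx₀.1.1
    have key : piece δ ⊆ (A_ hx₀ex.choose)ᶜ := by
      intro x hx
      have hxex := hZex x hx.1.1
      have hgx : g x = ι hxex.choose := by rw [hg]; simp only [dif_pos hxex]
      have hgx₀ : g x₀ = ι hx₀ex.choose := by rw [hg]; simp only [dif_pos hx₀ex]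
      have : ι hxex.choose = ι hx₀ex.choose := by
        rw [← hgx, ← hgx₀, hx.2, hx₀.2]
      have hchoose : hxex.choose = hx₀ex.choose := ι.injective this
      have := hxex.choose_spec.2
      rwa [hchoose] at this
    have hcompl : (A_ hx₀ex.choose)ᶜ ∈ U := Filter.mem_of_superset hδ key
    exact (Ultrafilter.compl_mem_iff_notMem.1 hcompl) (hAU hx₀ex.choose)
  obtain ⟨b, hbB, hbA⟩ := hBbase.2 A hA
  obtain ⟨s, hsS, hsgt⟩ := hSunb (e ⟨b, hbB⟩)
  have hbBset : b ∈ Bset (⟨s, hsS⟩ : ↥S) := ⟨⟨b, hbB⟩, hsgt, rfl⟩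
  apply hAwit ⟨s, hsS⟩ b hbBset
  intro x hx
  exact hbA hx.1 ⟨s, hsS⟩ hx.2
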